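/- arXiv:1306.0557 — 9 statements merged into one kernel-verified Lean document; each statement's English description precedes it below -/
import Mathlib

section
/- If the inf-sup condition inf_{0≠z∈X} sup_{0≠y∈Y} |b(z,y)|/(‖z‖_X ‖y‖_Y) ≥ C₁ holds, then for the optimal test space Y_h^opt = T(X_h) the discrete inf-sup condition inf_{0≠z_h∈X_h} sup_{0≠y_h∈Y_h^opt} |b(z_h,y_h)|/(‖z_h‖_X ‖y_h‖_Y) ≥ C₁ holds with the same constant. In fact, for each z_h ∈ X_h, sup over Y_h^opt of |b(z_h,·)|/‖·‖_Y equals the sup over all of Y. -/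
/-- If the inf-sup condition holds with constant `C₁`, then for the optimal test space
`Y_h^opt = T(X_h)` the discrete inf-sup condition holds with the same constant; in fact,
for every `z_h ∈ X_h` the sup of `|b(z_h,·)|/‖·‖` over `Y_h^opt` equals the sup over `Y`. -/
theorem stmt_1
    {X Y : Type*} [NormedAddCommGroup X] [InnerProductSpace ℂ X] [CompleteSpace X]
    [NormedAddCommGroup Y] [InnerProductSpace ℂ Y] [CompleteSpace Y]
    (b : X →L[ℂ] Y →L⋆[ℂ] ℂ) (T : X → Y)
    (hT : ∀ z y, (inner ℂ y (T z) : ℂ) = b z y)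
    (Xh : Submodule ℂ X) (hXh : FiniteDimensional ℂ Xh)
    (C₁ : ℝ) (hC₁ : 0 < C₁)
    (hinfsup : ∀ z : X, C₁ * ‖z‖ ≤ ⨆ y : Y, ‖b z y‖ / ‖y‖) :
    ∀ zh ∈ Xh,
      (⨆ yh : (T '' (Xh : Set X) : Set Y), ‖b zh (yh : Y)‖ / ‖(yh : Y)‖)
        = (⨆ y : Y, ‖b zh y‖ / ‖y‖) ∧
      C₁ * ‖zh‖ ≤ ⨆ yh : (T '' (Xh : Set X) : Set Y), ‖b zh (yh : Y)‖ / ‖(yh : Y)‖ := by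
  intro zh hzh
  -- basic pointwise bound: ‖b zh y‖ / ‖y‖ ≤ ‖T zh‖
  have hbound : ∀ y : Y, ‖b zh y‖ / ‖y‖ ≤ ‖T zh‖ := by
    intro y
    rcases eq_or_ne y 0 with rfl | hy
    · simp
    · rw [div_le_iff₀ (norm_pos_iff.mpr hy)]
      calc ‖b zh y‖ = ‖(inner ℂ y (T zh) : ℂ)‖ := by rw [hT]
        _ ≤ ‖y‖ * ‖T zh‖ := norm_inner_le_norm _ _
        _ = ‖T zh‖ * ‖y‖ := mul_comm _ _
  -- value at y = T zh
  have hval : ‖b zh (T zh)‖ / ‖T zh‖ = ‖T zh‖ := by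
    rcases eq_or_ne (T zh) 0 with h0 | h0
    · have : (b zh) (T zh) = 0 := by
        rw [← hT]; rw [h0]; simp
      simp [this, h0]
    · have : ‖b zh (T zh)‖ = ‖T zh‖ * ‖T zh‖ := by
        rw [← hT]
        rw [show (inner ℂ (T zh) (T zh) : ℂ) = ((‖T zh‖ : ℂ))^2 from
          inner_self_eq_norm_sq_to_K (T zh)]
        simp [sq]
      rw [this, mul_div_assoc, div_self (norm_ne_zero_iff.mpr h0), mul_one]
  have hne : Nonempty (T '' (Xh : Set X) : Set Y) := ⟨⟨T zh, ⟨zh, hzh, rfl⟩⟩⟩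
  -- both sups equal ‖T zh‖
  have hsupY : (⨆ y : Y, ‖b zh y‖ / ‖y‖) = ‖T zh‖ := by
    apply le_antisymm (ciSup_le hbound)
    rw [← hval]
    exact le_ciSup ⟨‖T zh‖, Set.forall_mem_range.mpr hbound⟩ (T zh)
  have hsupH : (⨆ yh : (T '' (Xh : Set X) : Set Y), ‖b zh (yh : Y)‖ / ‖(yh : Y)‖)
      = ‖T zh‖ := by
    refine le_antisymm (ciSup_le fun yh => hbound yh) ?_
    rw [← hval]
    exact le_ciSup (f := fun yh : (T '' (Xh : Set X) : Set Y) => ‖b zh (yh : Y)‖ / ‖(yh : Y)‖)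
      ⟨‖T zh‖, Set.forall_mem_range.mpr fun yh => hbound yh⟩ ⟨T zh, ⟨zh, hzh, rfl⟩⟩
  refine ⟨hsupH.trans hsupY.symm, ?_⟩
  rw [hsupH, ← hsupY]
  exact hinfsup zh
end

section
/- Let X be a Banach space and Y a reflexive Banach space, and b : X × Y → ℂ a continuous sesquilinear form. If {z ∈ X : b(z,y)=0 ∀y∈Y} = {0} and inf_{0≠y∈Y} sup_{0≠z∈X} |b(z,y)|/(‖y‖_Y ‖z‖_X) ≥ C₁, then {y ∈ Y : b(z,y)=0 ∀z∈X} = {0} and inf_{0≠z∈X} sup_{0≠y∈Y} |b(z,y)|/(‖z‖_X ‖y‖_Y) ≥ C₁, with the same constant C₁. -/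
set_option maxHeartbeats 1000000
open NormedSpace Filter

section
variable {X Y : Type*} [NormedAddCommGroup X] [NormedSpace ℂ X] [CompleteSpace X]
    [NormedAddCommGroup Y] [NormedSpace ℂ Y]

noncomputable def cstar₁ (f : Y →L[ℂ] ℂ) : Y →L⋆[ℂ] ℂ :=
  LinearMap.mkContinuous
    { toFun := fun y => star (f y)
      map_add' := by intro a b; simp [star_add]
      map_smul' := by intro c y; simp [mul_comm] }
    ‖f‖ (by intro y; simpa using f.le_opNorm y)

noncomputable def cstar₂ (g : Y →L⋆[ℂ] ℂ) : Y →L[ℂ] ℂ :=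
  LinearMap.mkContinuous
    { toFun := fun y => star (g y)
      map_add' := by intro a b; simp [star_add]
      map_smul' := by intro c y; simp [mul_comm] }
    ‖g‖ (by intro y; simpa using g.le_opNorm y)

@[simp] lemma cstar₁_apply (f : Y →L[ℂ] ℂ) (y : Y) : cstar₁ f y = star (f y) := rfl
@[simp] lemma cstar₂_apply (g : Y →L⋆[ℂ] ℂ) (y : Y) : cstar₂ g y = star (g y) := rfl

lemma aux_refl (hrefl : Function.Surjective (NormedSpace.inclusionInDoubleDual ℂ Y))
    (ψ : (Y →L⋆[ℂ] ℂ) →L[ℂ] ℂ) : ∃ y : Y, ∀ g : Y →L⋆[ℂ] ℂ, ψ g = g y := by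
  have hnorm : ∀ f : Y →L[ℂ] ℂ, ‖ψ (cstar₁ f)‖ ≤ ‖ψ‖ * ‖f‖ := by
    intro f
    calc ‖ψ (cstar₁ f)‖ ≤ ‖ψ‖ * ‖cstar₁ f‖ := ψ.le_opNorm _
    _ ≤ ‖ψ‖ * ‖f‖ := by
        gcongr
        refine ContinuousLinearMap.opNorm_le_bound _ (norm_nonneg f) ?_
        intro y; simpa using f.le_opNorm y
  set Ψ : StrongDual ℂ (StrongDual ℂ Y) := LinearMap.mkContinuous
    { toFun := fun f => star (ψ (cstar₁ f))
      map_add' := by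
        intro a b
        have : cstar₁ (a + b) = cstar₁ a + cstar₁ b := by ext y; simp [star_add]
        simp [this, star_add]
      map_smul' := by
        intro c f
        have : cstar₁ (c • f) = star c • cstar₁ f := by ext y; simp [mul_comm]
        simp [this, mul_comm] }
    ‖ψ‖ (by intro f; simpa using hnorm f) with hΨ
  obtain ⟨y, hy⟩ := hrefl Ψ
  refine ⟨y, fun g => ?_⟩
  have h1 : Ψ (cstar₂ g) = (cstar₂ g) y := by
    rw [← hy]; exact NormedSpace.dual_def ℂ Y y (cstar₂ g)
  have h2 : cstar₁ (cstar₂ g) = g := by ext y'; simp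
  have : star (ψ g) = star (g y) := by
    simpa [hΨ, h2, LinearMap.mkContinuous_apply] using h1
  exact star_injective this

lemma approx (b : X →L[ℂ] Y →L⋆[ℂ] ℂ) {C₁ : ℝ} (hC₁ : 0 < C₁)
    (hrefl : Function.Surjective (NormedSpace.inclusionInDoubleDual ℂ Y))
    (hinfsup : ∀ y : Y, C₁ * ‖y‖ ≤ ⨆ z : X, ‖b z y‖ / ‖z‖)
    (g : Y →L⋆[ℂ] ℂ) {ε : ℝ} (hε : 0 < ε) :
    ∃ z : X, C₁ * ‖z‖ ≤ ‖g‖ ∧ ‖b z - g‖ < ε := by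
  set D := closure (⇑b '' Metric.closedBall (0:X) 1) with hD
  have hDconv : Convex ℝ D := by
    refine Convex.closure ?_
    have := (convex_closedBall (0:X) 1).linear_image
      ((b.restrictScalars ℝ).toLinearMap)
    simpa using this
  have h0D : (0 : Y →L⋆[ℂ] ℂ) ∈ D := by
    refine subset_closure ⟨0, by simp, by simp⟩
  have hmem : ∀ h : Y →L⋆[ℂ] ℂ, ‖h‖ ≤ C₁ → h ∈ D := by
    intro h hhn
    by_contra hgD
    obtain ⟨φ, u, hφ, hu⟩ := geometric_hahn_banach_closed_point hDconv isClosed_closure hgD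
    have hu0 : 0 < u := by have := hφ 0 h0D; simpa using this
    set ψ : (Y →L⋆[ℂ] ℂ) →L[ℂ] ℂ := φ.extendTo𝕜' with hψ
    have hre : ∀ v, RCLike.re (ψ v) = φ v := fun v => φ.toLinearMap.extendTo𝕜'_apply_re v
    obtain ⟨y₀, hy₀⟩ := aux_refl hrefl ψ
    have hball : ∀ z : X, ‖z‖ ≤ 1 → ‖b z y₀‖ ≤ u := by
      intro z hz
      obtain ⟨c, hc1, hcv⟩ : ∃ c : ℂ, ‖c‖ = 1 ∧ c * (b z y₀) = (‖b z y₀‖ : ℂ) := by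
        rcases eq_or_ne (b z y₀) 0 with hv | hv
        · exact ⟨1, by simp, by simp [hv]⟩
        · refine ⟨(‖b z y₀‖ : ℂ) / (b z y₀), ?_, by field_simp⟩
          rw [norm_div]
          simp [norm_eq_zero, hv]
      have hcz : b (c • z) ∈ D := by
        refine subset_closure ⟨c • z, ?_, rfl⟩
        simpa [norm_smul, hc1] using hz
      have h1 : RCLike.re (ψ (b (c • z))) < u := by rw [hre]; exact hφ _ hcz
      rw [hy₀] at h1
      have heq : (b (c • z)) y₀ = c * (b z y₀) := by
        rw [map_smul]; rfl
      rw [heq, hcv] at h1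
      simpa using h1.le
    have hscale : ∀ z : X, ‖b z y₀‖ / ‖z‖ ≤ u := by
      intro z
      rcases eq_or_ne z 0 with rfl | hz
      · simp [hu0.le]
      · rw [div_le_iff₀ (norm_pos_iff.2 hz)]
        have := hball ((‖z‖ : ℂ)⁻¹ • z) (by
          have : ‖z‖ ≠ 0 := norm_ne_zero_iff.2 hz
          simp [norm_smul, this])
        rw [map_smul] at this
        have h2 : ‖((‖z‖:ℂ)⁻¹ • (b z)) y₀‖ = ‖z‖⁻¹ * ‖b z y₀‖ := by
          simp [ContinuousLinearMap.smul_apply, norm_smul]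
        rw [h2] at this
        have hzpos : (0:ℝ) < ‖z‖ := norm_pos_iff.2 hz
        calc ‖b z y₀‖ = ‖z‖ * (‖z‖⁻¹ * ‖b z y₀‖) := by field_simp
        _ ≤ ‖z‖ * u := by gcongr
        _ = u * ‖z‖ := mul_comm _ _
    have hC1y : C₁ * ‖y₀‖ ≤ u := le_trans (hinfsup y₀) (ciSup_le hscale)
    have hfin : u < ‖h‖ * ‖y₀‖ := by
      refine lt_of_lt_of_le hu ?_
      rw [← hre, hy₀]
      calc RCLike.re (h y₀) ≤ ‖h y₀‖ := RCLike.re_le_norm _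
      _ ≤ ‖h‖ * ‖y₀‖ := h.le_opNorm _
    have : ‖h‖ * ‖y₀‖ ≤ C₁ * ‖y₀‖ := mul_le_mul_of_nonneg_right hhn (norm_nonneg _)
    linarith
  -- now general g
  have hns : ∀ (a : ℂ) (f : Y →L⋆[ℂ] ℂ), ‖a • f‖ = ‖a‖ * ‖f‖ := fun a f => norm_smul a f
  rcases eq_or_ne g 0 with rfl | hg
  · exact ⟨0, by simp, by simpa using hε⟩
  · have hgpos : (0:ℝ) < ‖g‖ := norm_pos_iff.2 hg
    set c : ℝ := C₁ / ‖g‖ with hc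
    have hcpos : 0 < c := div_pos hC₁ hgpos
    have hcn : ‖(c:ℂ)‖ = c := by simp [abs_of_pos hcpos]
    have hcn' : ‖((c:ℂ)⁻¹)‖ = c⁻¹ := by
      rw [norm_inv, hcn]
    have hmemg : ((c : ℂ) • g) ∈ D := by
      refine hmem _ ?_
      rw [hns, hcn, hc]
      field_simp
      exact le_rfl
    rw [hD, Metric.mem_closure_iff] at hmemg
    obtain ⟨d, hd, hdist⟩ := hmemg (c * ε) (by positivity)
    obtain ⟨z₁, hz₁, rfl⟩ := hd
    simp only [Metric.mem_closedBall, dist_zero_right] at hz₁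
    refine ⟨(c : ℂ)⁻¹ • z₁, ?_, ?_⟩
    · rw [norm_smul, hcn']
      calc C₁ * (c⁻¹ * ‖z₁‖) ≤ C₁ * (c⁻¹ * 1) := by
            have := inv_pos.2 hcpos
            gcongr
      _ = ‖g‖ := by rw [hc]; field_simp
    · rw [map_smul]
      have hdist' : ‖b z₁ - (c:ℂ) • g‖ < c * ε := by
        rw [dist_eq_norm, norm_sub_rev] at hdist; exact hdist
      have heq2 : (c:ℂ)⁻¹ • (b z₁) - g = (c:ℂ)⁻¹ • (b z₁ - (c:ℂ) • g) := by
        rw [smul_sub, smul_smul]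
        have : ((c:ℂ)⁻¹ * c) = 1 := by
          rw [inv_mul_cancel₀]
          exact_mod_cast ne_of_gt hcpos
        rw [this, one_smul]
      rw [heq2, hns, hcn']
      calc c⁻¹ * ‖b z₁ - (c:ℂ) • g‖ < c⁻¹ * (c * ε) := by
            have := inv_pos.2 hcpos
            gcongr
      _ = ε := by field_simp


lemma exact_preimage (b : X →L[ℂ] Y →L⋆[ℂ] ℂ) {C₁ : ℝ} (hC₁ : 0 < C₁)
    (hrefl : Function.Surjective (NormedSpace.inclusionInDoubleDual ℂ Y))
    (hinfsup : ∀ y : Y, C₁ * ‖y‖ ≤ ⨆ z : X, ‖b z y‖ / ‖z‖)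
    (g : Y →L⋆[ℂ] ℂ) {ε : ℝ} (hε : 0 < ε) :
    ∃ w : X, b w = g ∧ C₁ * ‖w‖ ≤ ‖g‖ + ε := by
  set δ : ℕ → ℝ := fun n => ε / 2 / 2 ^ n with hδdef
  have hδ : ∀ n, 0 < δ n := by intro n; positivity
  have happrox : ∀ (n : ℕ) (rr : Y →L⋆[ℂ] ℂ),
      ∃ z : X, C₁ * ‖z‖ ≤ ‖rr‖ ∧ ‖b z - rr‖ < δ n :=
    fun n rr => approx b hC₁ hrefl hinfsup rr (hδ n)
  choose step h1 h2 using happrox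
  set r : ℕ → Y →L⋆[ℂ] ℂ :=
    fun n => Nat.rec (motive := fun _ => Y →L⋆[ℂ] ℂ) g
      (fun n rn => rn - b (step n rn)) n with hrdef
  set z : ℕ → X := fun n => step n (r n) with hzdef
  have hr0 : r 0 = g := rfl
  have hrsucc : ∀ n, r (n + 1) = r n - b (z n) := fun n => rfl
  have hrb : ∀ n, ‖r (n + 1)‖ < δ n := by
    intro n
    rw [hrsucc, norm_sub_rev]
    exact h2 n (r n)
  have hz0 : C₁ * ‖z 0‖ ≤ ‖g‖ := h1 0 (r 0)
  have hzs : ∀ n, C₁ * ‖z (n + 1)‖ ≤ δ n :=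
    fun n => le_trans (h1 (n + 1) (r (n + 1))) (hrb n).le
  have hznorm : ∀ n, ‖z (n + 1)‖ ≤ (ε / C₁) / 2 / 2 ^ n := by
    intro n
    have h := hzs n
    rw [hδdef] at h
    rw [div_div, div_div, le_div_iff₀ (by positivity)]
    calc ‖z (n+1)‖ * (C₁ * (2 * 2 ^ n)) = (C₁ * ‖z (n+1)‖) * (2 * 2^n) := by ring
    _ ≤ (ε / 2 / 2^n) * (2 * 2^n) := by
        have : (0:ℝ) < 2 * 2^n := by positivity
        gcongr
    _ = ε := by field_simp
  have hsumnorm : Summable fun n => ‖z n‖ := by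
    rw [← summable_nat_add_iff 1]
    exact Summable.of_nonneg_of_le (fun n => norm_nonneg _) hznorm
      (summable_geometric_two' (ε / C₁))
  have hzsum : Summable z := hsumnorm.of_norm
  set w := ∑' n, z n with hw
  have hδtendsto : Tendsto δ atTop (nhds 0) := by
    have h : Tendsto (fun n : ℕ => (ε / 2) * (1/2 : ℝ) ^ n) atTop (nhds 0) := by
      simpa using (tendsto_pow_atTop_nhds_zero_of_lt_one (by norm_num) (by norm_num :
        (1/2:ℝ) < 1)).const_mul (ε / 2)
    have hδeq : δ = fun n : ℕ => (ε / 2) * (1/2 : ℝ) ^ n := by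
      funext n
      rw [hδdef]
      simp only [div_pow, one_pow, one_div, div_div, div_eq_mul_inv, inv_pow]
      rw [one_mul, inv_pow]
    rw [hδeq]
    exact h
  refine ⟨w, ?_, ?_⟩
  · -- b w = g
    have hps : Tendsto (fun n => ∑ i ∈ Finset.range n, b (z i)) atTop (nhds (b w)) :=
      (hzsum.hasSum.mapL b).tendsto_sum_nat
    have hps2 : ∀ n, ∑ i ∈ Finset.range n, b (z i) = g - r n := by
      intro n
      induction n with
      | zero => simp [hr0]
      | succ n ih =>
        rw [Finset.sum_range_succ, ih, hrsucc n]
        abel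
    have hrt : Tendsto (fun n => r n) atTop (nhds 0) := by
      rw [← tendsto_add_atTop_iff_nat 1]
      rw [tendsto_zero_iff_norm_tendsto_zero]
      exact squeeze_zero (fun n => norm_nonneg _) (fun n => (hrb n).le) hδtendsto
    have hgt : Tendsto (fun n => g - r n) atTop (nhds g) := by
      have := hrt.const_sub g
      simpa using this
    have : Tendsto (fun n => ∑ i ∈ Finset.range n, b (z i)) atTop (nhds g) := by
      simp only [hps2]; exact hgt
    exact tendsto_nhds_unique hps this
  · -- norm bound
    have hn1 : ‖w‖ ≤ ∑' n, ‖z n‖ := norm_tsum_le_tsum_norm hsumnorm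
    have hn2 : ∑' n, ‖z n‖ = ‖z 0‖ + ∑' n, ‖z (n+1)‖ := Summable.tsum_eq_zero_add hsumnorm
    have hn3 : ∑' n, ‖z (n+1)‖ ≤ ε / C₁ := by
      calc ∑' n, ‖z (n+1)‖ ≤ ∑' n, (ε / C₁) / 2 / 2 ^ n := by
            refine Summable.tsum_le_tsum hznorm ?_ (summable_geometric_two' _)
            exact (summable_nat_add_iff 1).mpr hsumnorm
      _ = ε / C₁ := tsum_geometric_two' _
    have hz0' : ‖z 0‖ ≤ ‖g‖ / C₁ := by
      rw [le_div_iff₀ hC₁]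
      linarith [hz0]
    have : ‖w‖ ≤ ‖g‖ / C₁ + ε / C₁ := by
      calc ‖w‖ ≤ ∑' n, ‖z n‖ := hn1
      _ = ‖z 0‖ + ∑' n, ‖z (n+1)‖ := hn2
      _ ≤ ‖g‖ / C₁ + ε / C₁ := by gcongr
    calc C₁ * ‖w‖ ≤ C₁ * (‖g‖ / C₁ + ε / C₁) := by gcongr
    _ = ‖g‖ + ε := by field_simp


end

/-- (Exercise on inf-sup constants.) Let `X` be a Banach space and `Y` a reflexive Banach
space, `b` a continuous sesquilinear form on `X × Y`. If `{z : b(z,y)=0 ∀y} = {0}` and the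
test-side inf-sup condition holds with constant `C₁`, then `{y : b(z,y)=0 ∀z} = {0}` and the
trial-side inf-sup condition holds with the same constant `C₁`. -/
theorem stmt_4
    {X Y : Type*} [NormedAddCommGroup X] [NormedSpace ℂ X] [CompleteSpace X]
    [NormedAddCommGroup Y] [NormedSpace ℂ Y] [CompleteSpace Y]
    (hrefl : Function.Surjective (NormedSpace.inclusionInDoubleDual ℂ Y))
    (b : X →L[ℂ] Y →L⋆[ℂ] ℂ) (C₁ : ℝ) (hC₁ : 0 < C₁)
    (huniq : ∀ z : X, (∀ y : Y, b z y = 0) → z = 0)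
    (hinfsup : ∀ y : Y, C₁ * ‖y‖ ≤ ⨆ z : X, ‖b z y‖ / ‖z‖) :
    (∀ y : Y, (∀ z : X, b z y = 0) → y = 0) ∧
    (∀ z : X, C₁ * ‖z‖ ≤ ⨆ y : Y, ‖b z y‖ / ‖y‖) := by
  constructor
  · intro y hy
    have h := hinfsup y
    have h0 : (⨆ z : X, ‖b z y‖ / ‖z‖) = 0 := by
      have : ∀ z : X, ‖b z y‖ / ‖z‖ = 0 := by intro z; simp [hy z]
      simp only [this, ciSup_const]
    rw [h0] at h
    have : ‖y‖ = 0 := le_antisymm (by nlinarith [norm_nonneg y]) (norm_nonneg y)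
    exact norm_eq_zero.1 this
  · intro z₀
    -- main estimate: C₁ * ‖z₀‖ ≤ ‖b z₀‖
    have hmain : C₁ * ‖z₀‖ ≤ ‖b z₀‖ := by
      refine le_of_forall_pos_le_add ?_
      intro ε hε
      obtain ⟨w, hbw, hwn⟩ := exact_preimage b hC₁ hrefl hinfsup (b z₀) hε
      have hwz : z₀ = w := by
        have hdiff : ∀ y : Y, b (z₀ - w) y = 0 := by
          intro y
          rw [map_sub, ContinuousLinearMap.sub_apply, hbw, sub_self]
        exact sub_eq_zero.mp (huniq (z₀ - w) hdiff)
      calc C₁ * ‖z₀‖ = C₁ * ‖w‖ := by rw [hwz]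
      _ ≤ ‖b z₀‖ + ε := hwn
    -- then ‖b z₀‖ ≤ sup
    have hbdd : BddAbove (Set.range fun y : Y => ‖b z₀ y‖ / ‖y‖) := by
      refine ⟨‖b z₀‖, ?_⟩
      rintro _ ⟨y, rfl⟩
      rcases eq_or_ne y 0 with rfl | hy
      · simp
      · rw [div_le_iff₀ (norm_pos_iff.2 hy)]
        exact (b z₀).le_opNorm y
    have hM0 : 0 ≤ ⨆ y : Y, ‖b z₀ y‖ / ‖y‖ :=
      Real.iSup_nonneg fun y => by positivity
    have hop : ‖b z₀‖ ≤ ⨆ y : Y, ‖b z₀ y‖ / ‖y‖ := by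
      refine ContinuousLinearMap.opNorm_le_bound _ hM0 ?_
      intro y
      rcases eq_or_ne y 0 with rfl | hy
      · simp
      · have h := le_ciSup hbdd y
        rw [div_le_iff₀ (norm_pos_iff.2 hy)] at h
        exact h
    linarith
end

section
/- Under Assumption (well-posedness): {z ∈ X : b(z,y)=0 ∀y} = {0} and C₁‖y‖_Y ≤ sup_{0≠z∈X} |b(z,y)|/‖z‖_X ≤ C₂‖y‖_Y for all y∈Y, the energy norm satisfies C₁‖z‖_X ≤ |||z|||_X ≤ C₂‖z‖_X for all z ∈ X, where |||z|||_X = ‖Tz‖_Y = sup_{0≠y∈Y} |b(z,y)|/‖y‖_Y. -/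
/-- Under the well-posedness assumption (uniqueness on the trial side and two-sided
test-side bounds with constants `C₁, C₂`), the energy norm `|||z||| = ‖T z‖_Y` satisfies
`C₁ ‖z‖_X ≤ |||z||| ≤ C₂ ‖z‖_X` for all `z ∈ X`. -/
theorem stmt_5
    {X Y : Type*} [NormedAddCommGroup X] [InnerProductSpace ℂ X] [CompleteSpace X]
    [NormedAddCommGroup Y] [InnerProductSpace ℂ Y] [CompleteSpace Y]
    (b : X →L[ℂ] Y →L⋆[ℂ] ℂ) (T : X → Y)
    (hT : ∀ z y, (inner ℂ y (T z) : ℂ) = b z y)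
    (C₁ C₂ : ℝ) (hC₁ : 0 < C₁) (hC₂ : 0 < C₂)
    (huniq : ∀ z : X, (∀ y : Y, b z y = 0) → z = 0)
    (hlow : ∀ y : Y, C₁ * ‖y‖ ≤ ⨆ z : X, ‖b z y‖ / ‖z‖)
    (hup : ∀ y : Y, (⨆ z : X, ‖b z y‖ / ‖z‖) ≤ C₂ * ‖y‖) :
    ∀ z : X, C₁ * ‖z‖ ≤ ‖T z‖ ∧ ‖T z‖ ≤ C₂ * ‖z‖ := by
  -- T is linear
  have hadd : ∀ z z' : X, T (z + z') = T z + T z' := by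
    intro z z'
    apply ext_inner_left ℂ
    intro y
    rw [inner_add_right, hT, hT, hT, map_add]
    simp
  have hsmul : ∀ (c : ℂ) (z : X), T (c • z) = c • T z := by
    intro c z
    apply ext_inner_left ℂ
    intro y
    rw [inner_smul_right, hT, hT, map_smul]
    simp
  -- bound : ‖T z‖ ≤ ‖b‖ * ‖z‖
  have hbound : ∀ z : X, ‖T z‖ ≤ ‖b‖ * ‖z‖ := by
    intro z
    have h1 : ((‖T z‖ : ℂ)) ^ 2 = b z (T z) := by
      rw [← hT z (T z), inner_self_eq_norm_sq_to_K]
      norm_cast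
    have h2 : ‖T z‖ ^ 2 ≤ ‖b‖ * ‖z‖ * ‖T z‖ := by
      calc ‖T z‖ ^ 2 = ‖((‖T z‖ : ℂ)) ^ 2‖ := by
            rw [norm_pow, Complex.norm_real, norm_norm]
        _ = ‖b z (T z)‖ := by rw [h1]
        _ ≤ ‖b z‖ * ‖T z‖ := (b z).le_opNorm _
        _ ≤ ‖b‖ * ‖z‖ * ‖T z‖ := by
            gcongr
            all_goals first | positivity | exact b.le_opNorm z | skip
    rcases eq_or_ne (T z) 0 with h | h
    · rw [h, norm_zero]; positivity
    · have h3 : ‖T z‖ * ‖T z‖ ≤ (‖b‖ * ‖z‖) * ‖T z‖ := by rw [← sq]; exact h2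
      exact le_of_mul_le_mul_right h3 (norm_pos_iff.mpr h)
  -- package T as a continuous linear map
  let Tl : X →ₗ[ℂ] Y := { toFun := T, map_add' := hadd, map_smul' := hsmul }
  let T' : X →L[ℂ] Y := LinearMap.mkContinuous Tl ‖b‖ hbound
  have hT' : ∀ z, T' z = T z := fun z => rfl
  let S := ContinuousLinearMap.adjoint T'
  have hS : ∀ (y : Y) (z : X), (inner ℂ (S y) z : ℂ) = b z y := by
    intro y z
    rw [ContinuousLinearMap.adjoint_inner_left, hT', hT]
  -- the sup family is bounded above, and bounded by ‖S y‖
  have hterm : ∀ (y : Y) (z : X), ‖b z y‖ / ‖z‖ ≤ ‖S y‖ := by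
    intro y z
    rcases eq_or_ne z 0 with rfl | hz
    · simp
    · rw [div_le_iff₀ (norm_pos_iff.mpr hz), ← hS]
      calc ‖(inner ℂ (S y) z : ℂ)‖ ≤ ‖S y‖ * ‖z‖ := norm_inner_le_norm _ _
        _ = ‖S y‖ * ‖z‖ := rfl
  have hbdd : ∀ y : Y, BddAbove (Set.range fun z : X => ‖b z y‖ / ‖z‖) := by
    intro y
    exact ⟨‖S y‖, by rintro _ ⟨z, rfl⟩; exact hterm y z⟩
  -- S is bounded below by C₁
  have hlowS : ∀ y : Y, C₁ * ‖y‖ ≤ ‖S y‖ := by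
    intro y
    exact le_trans (hlow y) (ciSup_le (hterm y))
  -- S is surjective
  have hsurj : ∀ z : X, ∃ y : Y, S y = z := by
    have hanti : AntilipschitzWith (Real.toNNReal C₁)⁻¹ S := by
      apply S.antilipschitz_of_bound
      intro y
      rw [NNReal.coe_inv, Real.coe_toNNReal _ hC₁.le, ← div_eq_inv_mul,
        le_div_iff₀ hC₁]
      linarith [hlowS y]
    have hclosed : IsClosed (Set.range S) := hanti.isClosed_range S.uniformContinuous
    have hKclosed : IsClosed ((LinearMap.range (S : Y →ₗ[ℂ] X) : Submodule ℂ X) : Set X) := by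
      rwa [LinearMap.coe_range]
    haveI : CompleteSpace (LinearMap.range (S : Y →ₗ[ℂ] X) : Submodule ℂ X) := hKclosed.completeSpace_coe
    have horth : (LinearMap.range (S : Y →ₗ[ℂ] X))ᗮ = ⊥ := by
      rw [Submodule.eq_bot_iff]
      intro x hx
      apply huniq
      intro y
      have := (Submodule.mem_orthogonal _ x).mp hx (S y) (LinearMap.mem_range_self _ y)
      rwa [hS] at this
    have htop : (LinearMap.range (S : Y →ₗ[ℂ] X) : Submodule ℂ X) = ⊤ :=
      Submodule.orthogonal_eq_bot_iff.mp horth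
    intro z
    have : z ∈ LinearMap.range (S : Y →ₗ[ℂ] X) := htop ▸ Submodule.mem_top
    exact this
  intro z
  constructor
  · -- lower bound
    rcases eq_or_ne z 0 with rfl | hz
    · simp
    · obtain ⟨y, hy⟩ := hsurj z
      have h1 : ‖z‖ ^ 2 ≤ ‖y‖ * ‖T z‖ := by
        have e1 : (inner ℂ z z : ℂ) = inner ℂ y (T' z) := by
          rw [← hy, ContinuousLinearMap.adjoint_inner_left]
        calc ‖z‖ ^ 2 = ‖(inner ℂ z z : ℂ)‖ := by
              rw [inner_self_eq_norm_sq_to_K]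
              norm_cast
              exact (abs_of_nonneg (by positivity)).symm
          _ = ‖(inner ℂ y (T' z) : ℂ)‖ := by rw [e1]
          _ ≤ ‖y‖ * ‖T' z‖ := norm_inner_le_norm _ _
          _ = ‖y‖ * ‖T z‖ := by rw [hT']
      have h2 : C₁ * ‖y‖ ≤ ‖z‖ := by rw [← hy]; exact hlowS y
      have h3 : C₁ * ‖z‖ * ‖z‖ ≤ ‖T z‖ * ‖z‖ := by
        calc C₁ * ‖z‖ * ‖z‖ = C₁ * ‖z‖ ^ 2 := by ring
          _ ≤ C₁ * (‖y‖ * ‖T z‖) := by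
              apply mul_le_mul_of_nonneg_left h1 hC₁.le
          _ = (C₁ * ‖y‖) * ‖T z‖ := by ring
          _ ≤ ‖z‖ * ‖T z‖ := by
              apply mul_le_mul_of_nonneg_right h2 (norm_nonneg _)
          _ = ‖T z‖ * ‖z‖ := mul_comm _ _
      exact le_of_mul_le_mul_right h3 (norm_pos_iff.mpr hz)
  · -- upper bound
    rcases eq_or_ne (T z) 0 with h | h
    · rw [h, norm_zero]; positivity
    · have hz : z ≠ 0 := by
        rintro rfl
        apply h
        have : T' (0 : X) = 0 := map_zero T'
        rwa [hT'] at this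
      have e1 : ((‖T z‖ : ℂ)) ^ 2 = b z (T z) := by
        rw [← hT z (T z), inner_self_eq_norm_sq_to_K]
        norm_cast
      have e2 : ‖b z (T z)‖ = ‖T z‖ ^ 2 := by
        rw [← e1, norm_pow, Complex.norm_real, norm_norm]
      have h1 : ‖b z (T z)‖ / ‖z‖ ≤ C₂ * ‖T z‖ :=
        le_trans (le_ciSup (hbdd (T z)) z) (hup (T z))
      rw [e2, div_le_iff₀ (norm_pos_iff.mpr hz)] at h1
      have h3 : ‖T z‖ * ‖T z‖ ≤ (C₂ * ‖z‖) * ‖T z‖ := by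
        calc ‖T z‖ * ‖T z‖ = ‖T z‖ ^ 2 := by ring
          _ ≤ C₂ * ‖T z‖ * ‖z‖ := h1
          _ = (C₂ * ‖z‖) * ‖T z‖ := by ring
      exact le_of_mul_le_mul_right h3 (norm_pos_iff.mpr h)
end

section
/- Let x solve b(x,y)=ℓ(y) for all y∈Y. Then x_h ∈ X_h solves the ideal PG method b(x_h,y_h)=ℓ(y_h) for all y_h ∈ T(X_h) if and only if x_h is the best approximation to x from X_h in the energy norm |||·|||_X = ‖T·‖_Y, i.e., |||x − x_h|||_X = inf_{z_h∈X_h} |||x − z_h|||_X. -/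
/-- Let `x` solve `b(x,y) = ℓ(y)` for all `y ∈ Y`. Then `x_h ∈ X_h` solves the ideal PG
method with optimal test space `T(X_h)` if and only if `x_h` is the best approximation to
`x` from `X_h` in the energy norm `|||z||| = ‖T z‖_Y`. -/
theorem stmt_7
    {X Y : Type*} [NormedAddCommGroup X] [InnerProductSpace ℂ X] [CompleteSpace X]
    [NormedAddCommGroup Y] [InnerProductSpace ℂ Y] [CompleteSpace Y]
    (b : X →L[ℂ] Y →L⋆[ℂ] ℂ) (T : X → Y)
    (hT : ∀ z y, (inner ℂ y (T z) : ℂ) = b z y)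
    (C₁ C₂ : ℝ) (hC₁ : 0 < C₁) (hC₂ : 0 < C₂)
    (huniq : ∀ z : X, (∀ y : Y, b z y = 0) → z = 0)
    (hlow : ∀ y : Y, C₁ * ‖y‖ ≤ ⨆ z : X, ‖b z y‖ / ‖z‖)
    (hcont : ∀ (z : X) (y : Y), ‖b z y‖ ≤ C₂ * ‖z‖ * ‖y‖)
    (Xh : Submodule ℂ X) (hXh : FiniteDimensional ℂ Xh)
    (ℓ : Y →L⋆[ℂ] ℂ) (x : X) (hx : ∀ y : Y, b x y = ℓ y)
    (xh : X) (hxh : xh ∈ Xh) :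
    (∀ z ∈ Xh, b xh (T z) = ℓ (T z)) ↔
      ‖T (x - xh)‖ = ⨅ zh : Xh, ‖T (x - (zh : X))‖ := by
  -- T is linear
  have hadd : ∀ z w : X, T (z + w) = T z + T w := by
    intro z w
    apply ext_inner_left ℂ
    intro y
    rw [inner_add_right, hT, hT, hT, map_add, ContinuousLinearMap.add_apply]
  have hsmul : ∀ (c : ℂ) (z : X), T (c • z) = c • T z := by
    intro c z
    apply ext_inner_left ℂ
    intro y
    rw [inner_smul_right, hT, hT, map_smul, ContinuousLinearMap.smul_apply, smul_eq_mul]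
  let Tl : X →ₗ[ℂ] Y := ⟨⟨T, hadd⟩, hsmul⟩
  have hTl : ∀ z : X, Tl z = T z := fun _ => rfl
  set M : Submodule ℂ Y := Xh.map Tl with hM
  have hvM : T xh ∈ M := ⟨xh, hxh, rfl⟩
  -- the two infima agree
  have hbdd : BddBelow (Set.range fun w : M => ‖T x - (w : Y)‖) :=
    ⟨0, Set.forall_mem_range.mpr fun _ => norm_nonneg _⟩
  have hbdd' : BddBelow (Set.range fun zh : Xh => ‖T (x - (zh : X))‖) :=
    ⟨0, Set.forall_mem_range.mpr fun _ => norm_nonneg _⟩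
  have hsub : ∀ z : X, T (x - z) = T x - T z := by
    intro z
    rw [← hTl, ← hTl, ← hTl, map_sub]
  have hinf : (⨅ zh : Xh, ‖T (x - (zh : X))‖) = ⨅ w : M, ‖T x - (w : Y)‖ := by
    apply le_antisymm
    · apply le_ciInf
      rintro ⟨w, z, hz, rfl⟩
      have : ‖T x - Tl z‖ = ‖T (x - z)‖ := by rw [hsub, hTl]
      rw [this]
      exact ciInf_le hbdd' ⟨z, hz⟩
    · apply le_ciInf
      rintro ⟨z, hz⟩
      calc (⨅ w : M, ‖T x - (w : Y)‖) ≤ ‖T x - ((⟨Tl z, z, hz, rfl⟩ : M) : Y)‖ :=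
            ciInf_le hbdd _
        _ = ‖T (x - z)‖ := by rw [hsub]; rfl
  rw [hinf, show T (x - xh) = T x - T xh from hsub xh,
    Submodule.norm_eq_iInf_iff_inner_eq_zero M hvM]
  constructor
  · rintro h w ⟨z, hz, rfl⟩
    have h0 : b (x - xh) (T z) = 0 := by
      rw [map_sub, ContinuousLinearMap.sub_apply, hx, h z hz, sub_self]
    have : (inner ℂ (T z) (T (x - xh)) : ℂ) = 0 := by rw [hT]; exact h0
    rw [hsub] at this
    rw [hTl]
    rw [← inner_conj_symm, this, map_zero]
  · intro h z hz
    have h0 := h (Tl z) ⟨z, hz, rfl⟩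
    have : (inner ℂ (T z) (T x - T xh) : ℂ) = 0 := by
      rw [← inner_conj_symm, hTl] at h0
      exact star_eq_zero.mp h0
    rw [← hsub, hT] at this
    rw [map_sub, ContinuousLinearMap.sub_apply, hx] at this
    linear_combination -this
end

section
/- Let x solve b(x,y)=ℓ(y) for all y∈Y. Then x_h ∈ X_h solves the ideal PG method with optimal test space T(X_h) if and only if x_h minimizes the residual in the dual norm: x_h = argmin_{z_h∈X_h} ‖ℓ − Bz_h‖_{Y*}, where B : X → Y* is defined by (Bx)(y) = b(x,y). -/
/-- Let `x` solve `b(x,y) = ℓ(y)` for all `y ∈ Y`. Then `x_h ∈ X_h` solves the ideal PG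
method with optimal test space `T(X_h)` if and only if `x_h` minimizes the residual in the
dual norm: `‖ℓ − B x_h‖_{Y*} = inf_{z_h ∈ X_h} ‖ℓ − B z_h‖_{Y*}`, where `B z = b(z,·)`. -/
theorem stmt_8
    {X Y : Type*} [NormedAddCommGroup X] [InnerProductSpace ℂ X] [CompleteSpace X]
    [NormedAddCommGroup Y] [InnerProductSpace ℂ Y] [CompleteSpace Y]
    (b : X →L[ℂ] Y →L⋆[ℂ] ℂ) (T : X → Y)
    (hT : ∀ z y, (inner ℂ y (T z) : ℂ) = b z y)
    (C₁ C₂ : ℝ) (hC₁ : 0 < C₁) (hC₂ : 0 < C₂)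
    (huniq : ∀ z : X, (∀ y : Y, b z y = 0) → z = 0)
    (hlow : ∀ y : Y, C₁ * ‖y‖ ≤ ⨆ z : X, ‖b z y‖ / ‖z‖)
    (hcont : ∀ (z : X) (y : Y), ‖b z y‖ ≤ C₂ * ‖z‖ * ‖y‖)
    (Xh : Submodule ℂ X) (hXh : FiniteDimensional ℂ Xh)
    (ℓ : Y →L⋆[ℂ] ℂ) (x : X) (hx : ∀ y : Y, b x y = ℓ y)
    (xh : X) (hxh : xh ∈ Xh) :
    (∀ z ∈ Xh, b xh (T z) = ℓ (T z)) ↔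
      ‖ℓ - b xh‖ = ⨅ zh : Xh, ‖ℓ - b (zh : X)‖ := by
  classical
  -- T is linear
  have hTadd : ∀ z w : X, T (z + w) = T z + T w := by
    intro z w
    apply ext_inner_left ℂ
    intro y
    rw [hT, inner_add_right, hT, hT, map_add, ContinuousLinearMap.add_apply]
  have hTsmul : ∀ (c : ℂ) (z : X), T (c • z) = c • T z := by
    intro c z
    apply ext_inner_left ℂ
    intro y
    rw [hT, inner_smul_right, hT, map_smul, ContinuousLinearMap.smul_apply,
      smul_eq_mul]
  let Tl : X →ₗ[ℂ] Y :=
    { toFun := T, map_add' := hTadd, map_smul' := hTsmul }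
  -- ℓ = b x
  have hℓ : b x = ℓ := ContinuousLinearMap.ext hx
  have hres : ∀ z : X, ℓ - b z = b (x - z) := by
    intro z; rw [← hℓ, ← map_sub]
  -- ‖b u‖ = ‖T u‖
  have hnorm : ∀ u : X, ‖b u‖ = ‖T u‖ := by
    intro u
    refine le_antisymm (ContinuousLinearMap.opNorm_le_bound _ (norm_nonneg _) fun y => ?_) ?_
    · rw [← hT]
      calc ‖(inner ℂ y (T u) : ℂ)‖ ≤ ‖y‖ * ‖T u‖ := norm_inner_le_norm _ _
        _ = ‖T u‖ * ‖y‖ := mul_comm _ _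
    · rcases eq_or_ne (T u) 0 with h | h
      · simp [h]
      · have h1 : ‖b u (T u)‖ ≤ ‖b u‖ * ‖T u‖ := (b u).le_opNorm (T u)
        have h2 : ‖b u (T u)‖ = ‖T u‖ * ‖T u‖ := by
          rw [← hT, inner_self_eq_norm_sq_to_K]
          simp [sq]
        rw [h2] at h1
        have hpos : (0 : ℝ) < ‖T u‖ := norm_pos_iff.mpr h
        exact le_of_mul_le_mul_right h1 hpos
  -- the image subspace
  set K : Submodule ℂ Y := Xh.map Tl with hK
  have hvK : T xh ∈ K := ⟨xh, hxh, rfl⟩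
  -- the inf over Xh equals the inf over K
  have hsurj : Function.Surjective (fun zh : Xh => (⟨Tl zh, ⟨zh, zh.2, rfl⟩⟩ : K)) := by
    rintro ⟨w, z, hz, rfl⟩
    exact ⟨⟨z, hz⟩, rfl⟩
  have hinf : (⨅ zh : Xh, ‖ℓ - b (zh : X)‖) = ⨅ w : K, ‖T x - (w : Y)‖ := by
    rw [← hsurj.iInf_comp (fun w : K => ‖T x - (w : Y)‖)]
    refine iInf_congr fun zh => ?_
    rw [hres, hnorm]
    show ‖Tl (x - zh)‖ = _
    rw [map_sub]
    rfl
  have hlhs : ‖ℓ - b xh‖ = ‖T x - T xh‖ := by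
    rw [hres, hnorm]
    show ‖Tl (x - xh)‖ = _
    rw [map_sub]
    rfl
  rw [hlhs, hinf, Submodule.norm_eq_iInf_iff_inner_eq_zero K hvK]
  constructor
  · rintro h w ⟨z, hz, rfl⟩
    have h1 : b xh (T z) = ℓ (T z) := h z hz
    rw [← hℓ, ← hT, ← hT] at h1
    show (inner ℂ (T x - T xh) (Tl z) : ℂ) = 0
    rw [inner_sub_left]
    show (inner ℂ (T x) (T z) : ℂ) - inner ℂ (T xh) (T z) = 0
    have h2 := congrArg (starRingEnd ℂ) h1
    rw [inner_conj_symm, inner_conj_symm] at h2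
    rw [h2, sub_self]
  · intro h z hz
    have h1 := h (Tl z) ⟨z, hz, rfl⟩
    rw [inner_sub_left, sub_eq_zero] at h1
    have h1' : (inner ℂ (T x) (T z) : ℂ) = inner ℂ (T xh) (T z) := h1
    have h2 := congrArg (starRingEnd ℂ) h1'
    rw [inner_conj_symm, inner_conj_symm] at h2
    rw [← hℓ, ← hT, ← hT]
    exact h2.symm
end

section
/- x_h ∈ X_h solves the ideal PG method with optimal test space T(X_h) if and only if the pair (x_h, ε), where ε = R_Y⁻¹(ℓ − Bx_h) is the error representation function, solves the mixed formulation: (ε, y)_Y + b(x_h, y) = ℓ(y) for all y ∈ Y, and b(z_h, ε) = 0 for all z_h ∈ X_h. -/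
/-- Mixed Galerkin reformulation: `x_h ∈ X_h` solves the ideal PG method with optimal test
space `T(X_h)` iff the pair `(x_h, ε)`, where `ε = R_Y⁻¹(ℓ − B x_h)` is the error
representation function (i.e. `(ε,y)_Y = ℓ(y) − b(x_h,y)` for all `y`), solves the mixed
formulation `(ε,y)_Y + b(x_h,y) = ℓ(y)` for all `y ∈ Y` and `b(z_h, ε) = 0` for all
`z_h ∈ X_h`. -/
theorem stmt_9
    {X Y : Type*} [NormedAddCommGroup X] [InnerProductSpace ℂ X] [CompleteSpace X]
    [NormedAddCommGroup Y] [InnerProductSpace ℂ Y] [CompleteSpace Y]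
    (b : X →L[ℂ] Y →L⋆[ℂ] ℂ) (T : X → Y)
    (hT : ∀ z y, (inner ℂ y (T z) : ℂ) = b z y)
    (Xh : Submodule ℂ X) (hXh : FiniteDimensional ℂ Xh)
    (ℓ : Y →L⋆[ℂ] ℂ) (xh : X) (hxh : xh ∈ Xh)
    (ε : Y) (hε : ∀ y : Y, (inner ℂ y ε : ℂ) = ℓ y - b xh y) :
    (∀ z ∈ Xh, b xh (T z) = ℓ (T z)) ↔
      ((∀ y : Y, (inner ℂ y ε : ℂ) + b xh y = ℓ y) ∧ ∀ zh ∈ Xh, b zh ε = 0) := by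
  have key : ∀ z : X, (b z ε = 0) ↔ (b xh (T z) = ℓ (T z)) := by
    intro z
    have h1 : (b z ε : ℂ) = (starRingEnd ℂ) (ℓ (T z) - b xh (T z)) := by
      rw [← hT z ε, ← inner_conj_symm, hε (T z)]
    rw [h1, map_sub, sub_eq_zero]
    exact ⟨fun h => ((starRingEnd ℂ).injective h).symm, fun h => congrArg _ h.symm⟩
  constructor
  · intro h
    refine ⟨fun y => by rw [hε y]; ring, fun zh hzh => (key zh).mpr (h zh hzh)⟩
  · intro ⟨_, h2⟩ z hz
    exact (key z).mp (h2 z hz)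
end

section
/- Suppose X = X₀ × X̂ with b((u,û), y) = b₀(u,y) + b̂(û,y), X_h = X_{h,0} × X̂_h, Y₀ = {y ∈ Y : b̂(û_h,y) = 0 ∀ û_h ∈ X̂_h} a closed subspace, T : X → Y with (Tz,y)_Y = b(z,y) for all y ∈ Y, and T₀ : X₀ → Y₀ with (T₀u, y)_Y = b₀(u,y) for all y ∈ Y₀. Then T₀(X_{h,0}) ⊆ T(X_h). Consequently, if (x_h, x̂_h) ∈ X_h solves b((x_h,x̂_h),y)=ℓ(y) for all y∈T(X_h), then x_h solves b₀(x_h,y)=ℓ(y) for all y∈T₀(X_{h,0}). -/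
noncomputable def conjFunctional {Y : Type*} [NormedAddCommGroup Y]
    [InnerProductSpace ℂ Y] (f : Y →L⋆[ℂ] ℂ) : Y →L[ℂ] ℂ where
  toFun y := starRingEnd ℂ (f y)
  map_add' a b := by simp
  map_smul' c a := by simp [mul_comm]
  cont := Complex.continuous_conj.comp f.continuous

lemma conjFunctional_apply {Y : Type*} [NormedAddCommGroup Y]
    [InnerProductSpace ℂ Y] (f : Y →L⋆[ℂ] ℂ) (y : Y) :
    conjFunctional f y = starRingEnd ℂ (f y) := rfl



/-- Hybrid method theorem: with `X = X₀ × X̂`, `b((u,û),y) = b₀(u,y) + b̂(û,y)`,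
`X_h = X_{h,0} × X̂_h`, `Y₀ = {y : b̂(û_h, y) = 0 ∀ û_h ∈ X̂_h}` closed, `T` the
trial-to-test operator for `b` and `T₀ : X₀ → Y₀` that for `b₀` (with test space `Y₀`),
we have `T₀(X_{h,0}) ⊆ T(X_h)`; consequently if `(x_h, x̂_h) ∈ X_h` solves the hybrid ideal
PG method, then `x_h` solves the ideal PG method for `b₀` with test space `T₀(X_{h,0})`. -/
theorem stmt_11
    {X₀ Xhat Y : Type*}
    [NormedAddCommGroup X₀] [InnerProductSpace ℂ X₀] [CompleteSpace X₀]
    [NormedAddCommGroup Xhat] [InnerProductSpace ℂ Xhat] [CompleteSpace Xhat]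
    [NormedAddCommGroup Y] [InnerProductSpace ℂ Y] [CompleteSpace Y]
    (b₀ : X₀ →L[ℂ] Y →L⋆[ℂ] ℂ) (bhat : Xhat →L[ℂ] Y →L⋆[ℂ] ℂ)
    (Xh0 : Submodule ℂ X₀) (hXh0 : FiniteDimensional ℂ Xh0)
    (Xhath : Submodule ℂ Xhat) (hXhath : FiniteDimensional ℂ Xhath)
    (Y₀ : Set Y) (hY₀ : Y₀ = {y : Y | ∀ uh ∈ Xhath, bhat uh y = 0})
    (hY₀closed : IsClosed Y₀)
    (T : X₀ × Xhat → Y)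
    (hT : ∀ (u : X₀) (uhat : Xhat) (y : Y),
      (inner ℂ y (T (u, uhat)) : ℂ) = b₀ u y + bhat uhat y)
    (T₀ : X₀ → Y)
    (hT₀mem : ∀ u : X₀, T₀ u ∈ Y₀)
    (hT₀ : ∀ (u : X₀), ∀ y ∈ Y₀, (inner ℂ y (T₀ u) : ℂ) = b₀ u y) :
    (T₀ '' (Xh0 : Set X₀)) ⊆ T '' ((Xh0.prod Xhath : Submodule ℂ (X₀ × Xhat)) : Set (X₀ × Xhat)) ∧
    ∀ (ℓ : Y →L⋆[ℂ] ℂ) (xh : X₀) (xhath : Xhat),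
      (xh, xhath) ∈ Xh0.prod Xhath →
      (∀ y ∈ T '' ((Xh0.prod Xhath : Submodule ℂ (X₀ × Xhat)) : Set (X₀ × Xhat)),
        b₀ xh y + bhat xhath y = ℓ y) →
      ∀ y ∈ T₀ '' (Xh0 : Set X₀), b₀ xh y = ℓ y := by
  classical
  -- Riesz representative of an antilinear functional
  have hr : ∀ f : Y →L⋆[ℂ] ℂ, ∃ r : Y, ∀ y, (inner ℂ y r : ℂ) = f y := by
    intro f
    refine ⟨(InnerProductSpace.toDual ℂ Y).symm (conjFunctional f), ?_⟩
    intro y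
    have := InnerProductSpace.toDual_symm_apply (𝕜 := ℂ) (E := Y)
      (y := conjFunctional f) (x := y)
    rw [← inner_conj_symm, this, conjFunctional_apply]
    simp
  obtain ⟨r, hrP⟩ : ∃ r : Xhat → Y, ∀ uh2 y, (inner ℂ y (r uh2) : ℂ) = bhat uh2 y :=
    ⟨fun uh2 => (hr (bhat uh2)).choose, fun uh2 => (hr (bhat uh2)).choose_spec⟩
  have radd : ∀ a b : Xhat, r (a + b) = r a + r b := by
    intro a b
    apply ext_inner_left ℂ
    intro y
    rw [inner_add_right, hrP, hrP, hrP]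
    simp
  have rsmul : ∀ (c : ℂ) (a : Xhat), r (c • a) = c • r a := by
    intro c a
    apply ext_inner_left ℂ
    intro y
    rw [inner_smul_right, hrP, hrP]
    simp
  let rL : Xhat →ₗ[ℂ] Y := ⟨⟨r, radd⟩, rsmul⟩
  let K : Submodule ℂ Y := Xhath.map rL
  haveI : FiniteDimensional ℂ K := Module.Finite.map Xhath rL
  have hY0K : Y₀ = (Kᗮ : Set Y) := by
    rw [hY₀]
    ext y
    simp only [Set.mem_setOf_eq, SetLike.mem_coe, Submodule.mem_orthogonal]
    constructor
    · rintro h v ⟨uh2, huh2, rfl⟩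
      have h0 : (inner ℂ y (r uh2) : ℂ) = 0 := by rw [hrP uh2 y]; exact h uh2 huh2
      have h1 : (inner ℂ y (rL uh2) : ℂ) = 0 := h0
      rw [← inner_conj_symm, h1, map_zero]
    · intro h uh2 huh2
      have h1 : (inner ℂ (rL uh2 : Y) y : ℂ) = 0 := h (rL uh2) ⟨uh2, huh2, rfl⟩
      have h2 : (inner ℂ (r uh2) y : ℂ) = 0 := h1
      rw [← hrP uh2 y, ← inner_conj_symm, h2, map_zero]
  have key : ∀ u : X₀, ∃ uh2 ∈ Xhath, T (u, uh2) = T₀ u := by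
    intro u
    have hw : ∀ y : Y, (inner ℂ y (T (u, 0)) : ℂ) = b₀ u y := by
      intro y; rw [hT]; simp
    have hmem : T₀ u - T (u, 0) ∈ Kᗮᗮ := by
      rw [Submodule.mem_orthogonal]
      intro v hv
      have hvY : v ∈ Y₀ := by rw [hY0K]; exact hv
      rw [inner_sub_right, hT₀ u v hvY, hw v, sub_self]
    rw [Submodule.orthogonal_orthogonal] at hmem
    obtain ⟨uh2, huh2, hruh2⟩ := hmem
    refine ⟨uh2, huh2, ?_⟩
    apply ext_inner_left ℂ
    intro y
    rw [hT, ← hrP uh2 y]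
    have : (rL uh2 : Y) = T₀ u - T (u, 0) := hruh2
    rw [show r uh2 = T₀ u - T (u, 0) from this, inner_sub_right, hw y]
    ring
  constructor
  · rintro _ ⟨u, hu, rfl⟩
    obtain ⟨uh2, huh2, hTu⟩ := key u
    exact ⟨(u, uh2), Submodule.mem_prod.2 ⟨hu, huh2⟩, hTu⟩
  · intro ℓ xh xhath hmemp hsol y hy
    obtain ⟨u, hu, rfl⟩ := hy
    obtain ⟨uh2, huh2, hTu⟩ := key u
    have h1 := hsol (T₀ u) ⟨(u, uh2), Submodule.mem_prod.2 ⟨hu, huh2⟩, hTu⟩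
    have h2 : bhat xhath (T₀ u) = 0 := by
      have := hT₀mem u
      rw [hY₀] at this
      exact this xhath (Submodule.mem_prod.1 hmemp).2
    rw [h2, add_zero] at h1
    exact h1
end

section
/- Under the well-posedness assumption and the Fortin condition (existence of Π : Y → Y^r with b(w_h, v−Πv)=0 ∀ w_h∈X_h, v∈Y and ‖Πv‖_Y ≤ C_Π‖v‖_Y), the operator T^r restricted to X_h is injective, so dim(T^r(X_h)) = dim(X_h). -/
/-- Under the uniqueness part of the well-posedness assumption and the Fortin condition,
the operator `T^r` restricted to `X_h` is injective, so `dim (T^r(X_h)) = dim X_h`. -/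
theorem stmt_13
    {X Y : Type*} [NormedAddCommGroup X] [InnerProductSpace ℂ X] [CompleteSpace X]
    [NormedAddCommGroup Y] [InnerProductSpace ℂ Y] [CompleteSpace Y]
    (b : X →L[ℂ] Y →L⋆[ℂ] ℂ)
    (huniq : ∀ z : X, (∀ y : Y, b z y = 0) → z = 0)
    (Xh : Submodule ℂ X) (hXh : FiniteDimensional ℂ Xh)
    (Yr : Submodule ℂ Y) (hYr : IsClosed (Yr : Set Y))
    (Tr : X →ₗ[ℂ] Y)
    (hTrmem : ∀ w : X, Tr w ∈ Yr)
    (hTr : ∀ (w : X), ∀ y ∈ Yr, (inner ℂ y (Tr w) : ℂ) = b w y)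
    (CF : ℝ) (hCF : 0 < CF)
    (Fortin : Y →ₗ[ℂ] Y)
    (hFmem : ∀ v : Y, Fortin v ∈ Yr)
    (hFb : ∀ wh ∈ Xh, ∀ v : Y, b wh (v - Fortin v) = 0)
    (hFbdd : ∀ v : Y, ‖Fortin v‖ ≤ CF * ‖v‖) :
    Set.InjOn Tr (Xh : Set X) ∧
    Module.finrank ℂ (Xh.map Tr) = Module.finrank ℂ Xh := by
  -- key: if z ∈ Xh and Tr z = 0 then z = 0
  have key : ∀ z ∈ Xh, Tr z = 0 → z = 0 := by
    intro z hz hTz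
    apply huniq
    intro y
    have h1 : b z (y - Fortin y) = 0 := hFb z hz y
    have h2 : (b z) (Fortin y) = 0 := by
      rw [← hTr z (Fortin y) (hFmem y), hTz, inner_zero_right]
    have : (b z) y = (b z) (y - Fortin y) + (b z) (Fortin y) := by
      rw [← map_add, sub_add_cancel]
    rw [this, h1, h2, add_zero]
  have inj : Set.InjOn Tr (Xh : Set X) := by
    intro a ha b' hb hab
    have : a - b' = 0 := key _ (Xh.sub_mem ha hb) (by rw [map_sub, hab, sub_self])
    exact sub_eq_zero.mp this
  refine ⟨inj, ?_⟩
  have hinj : Function.Injective (Tr.domRestrict Xh) := by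
    intro a b' h
    ext
    exact inj a.2 b'.2 h
  have hrange : LinearMap.range (Tr.domRestrict Xh) = Xh.map Tr := by
    ext y
    constructor
    · rintro ⟨⟨x, hx⟩, rfl⟩; exact ⟨x, hx, rfl⟩
    · rintro ⟨x, hx, rfl⟩; exact ⟨⟨x, hx⟩, rfl⟩
  rw [← hrange]
  exact LinearMap.finrank_range_of_inj hinj
end

section
/- In the 1D setting with Ω=(0,1), X = L²(Ω) × ℝ, Y = H¹(Ω) with norm ‖v‖_Y² = ‖v'‖²_{L²} + |v(1)|², and b((u,û₁),v) = û₁v(1) − ∫₀¹ uv', the form satisfies the two-sided bound sup_{0≠z∈X} |b(z,v)|/‖z‖_X = ‖v‖_Y for all v ∈ Y (i.e., the inf-sup and continuity constants both equal 1), and {z ∈ X : b(z,v)=0 ∀v∈Y} = {0}. -/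
open MeasureTheory Set BoundedContinuousFunction
open scoped ENNReal

noncomputable section

namespace Stmt15

abbrev mu01 : Measure ℝ := volume.restrict (Set.Ioo (0:ℝ) 1)

instance : IsFiniteMeasure mu01 :=
  ⟨by simp [Measure.restrict_apply_univ, Real.volume_Ioo]⟩

instance : mu01.WeaklyRegular :=
  MeasureTheory.Measure.WeaklyRegular.restrict_of_measure_ne_top
    (by simp [Real.volume_Ioo])

lemma inner_eq_integral (u w : Lp ℝ 2 mu01) :
    (inner ℝ u w : ℝ) = ∫ x, (u : ℝ → ℝ) x * (w : ℝ → ℝ) x ∂mu01 := by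
  rw [MeasureTheory.L2.inner_def]
  simp [RCLike.inner_apply, mul_comm]

lemma memLp_of_hasDeriv {v g : ℝ → ℝ}
    (hd : ∀ x ∈ Set.Icc (0:ℝ) 1, HasDerivAt v (g x) x)
    (hi : IntervalIntegrable (fun x => (g x)^2) volume 0 1) :
    MemLp g 2 mu01 := by
  have h1 : (deriv v) =ᵐ[mu01] g := by
    refine (ae_restrict_iff' measurableSet_Ioo).mpr ?_
    exact Filter.Eventually.of_forall fun x hx =>
      (hd x (Set.Ioo_subset_Icc_self hx)).deriv
  have haemeas : AEStronglyMeasurable g mu01 :=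
    (measurable_deriv v).aestronglyMeasurable.congr h1
  rw [memLp_two_iff_integrable_sq haemeas]
  exact (hi.1).mono_set Set.Ioo_subset_Ioc_self

lemma norm_toLp_sq {g : ℝ → ℝ} (hg : MemLp g 2 mu01) :
    ‖hg.toLp g‖^2 = ∫ x in Set.Ioo (0:ℝ) 1, (g x)^2 := by
  have h := inner_eq_integral (hg.toLp g) (hg.toLp g)
  rw [real_inner_self_eq_norm_sq] at h
  rw [h]
  refine integral_congr_ae ?_
  filter_upwards [hg.coeFn_toLp] with x hx
  rw [hx]; ring

lemma integral_mul_eq_inner (u : Lp ℝ 2 mu01) {g : ℝ → ℝ} (hg : MemLp g 2 mu01) :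
    ∫ x in Set.Ioo (0:ℝ) 1, (u : ℝ→ℝ) x * g x = (inner ℝ u (hg.toLp g) : ℝ) := by
  rw [inner_eq_integral]
  refine integral_congr_ae ?_
  filter_upwards [hg.coeFn_toLp] with x hx
  rw [hx]

lemma intervalIntegral_eq (g : ℝ → ℝ) :
    (∫ x in (0:ℝ)..1, (g x)^2) = ∫ x in Set.Ioo (0:ℝ) 1, (g x)^2 := by
  rw [intervalIntegral.integral_of_le zero_le_one,
    MeasureTheory.integral_Ioc_eq_integral_Ioo]

end Stmt15

end

open Stmt15 in
/-- For the 1D formulation with `X = L²(0,1) × ℝ`, `Y = H¹(0,1)` (modeled by an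
everywhere-differentiable representative `v` with derivative `g ∈ L²(0,1)`), norm
`‖v‖_Y² = ‖v'‖²_{L²} + |v(1)|²`, and `b((u,û₁),v) = û₁ v(1) − ∫₀¹ u v'`:
for every `v ∈ Y` the supremum of `|b(z,v)|/‖z‖_X` over nonzero `z ∈ X` is attained and
equals `‖v‖_Y` (so the inf-sup and continuity constants are both 1), and
`{z ∈ X : b(z,v) = 0 ∀ v ∈ Y} = {0}`. -/
theorem stmt_15 :
    (∀ v g : ℝ → ℝ,
      (∀ x ∈ Set.Icc (0:ℝ) 1, HasDerivAt v (g x) x) →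
      IntervalIntegrable (fun x => (g x)^2) volume 0 1 →
      IsGreatest
        {t : ℝ | ∃ (u : Lp ℝ 2 (volume.restrict (Set.Ioo (0:ℝ) 1))) (u1 : ℝ),
          ¬(u = 0 ∧ u1 = 0) ∧
          t = |u1 * v 1 - ∫ x in Set.Ioo (0:ℝ) 1, (u : ℝ → ℝ) x * g x| /
              Real.sqrt (‖u‖^2 + u1^2)}
        (Real.sqrt ((∫ x in (0:ℝ)..1, (g x)^2) + (v 1)^2))) ∧
    (∀ (u : Lp ℝ 2 (volume.restrict (Set.Ioo (0:ℝ) 1))) (u1 : ℝ),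
      (∀ v g : ℝ → ℝ,
        (∀ x ∈ Set.Icc (0:ℝ) 1, HasDerivAt v (g x) x) →
        IntervalIntegrable (fun x => (g x)^2) volume 0 1 →
        u1 * v 1 - (∫ x in Set.Ioo (0:ℝ) 1, (u : ℝ → ℝ) x * g x) = 0) →
      u = 0 ∧ u1 = 0) := by
  constructor
  · intro v g hd hi
    have hg : MemLp g 2 mu01 := memLp_of_hasDeriv hd hi
    set c : ℝ := ∫ x in Set.Ioo (0:ℝ) 1, (g x)^2 with hc
    have hc0 : 0 ≤ c := integral_nonneg fun x => sq_nonneg _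
    have hint : (∫ x in (0:ℝ)..1, (g x)^2) = c := intervalIntegral_eq g
    set A : ℝ := c + (v 1)^2 with hA
    have hA0 : 0 ≤ A := by positivity
    rw [hint]
    constructor
    · -- membership
      rcases eq_or_lt_of_le hA0 with hAeq | hApos
      · -- A = 0 : v 1 = 0, use u = 0, u1 = 1
        have hv1 : v 1 = 0 := by nlinarith [sq_nonneg (v 1)]
        refine ⟨0, 1, by simp, ?_⟩
        have hz : (∫ x in Set.Ioo (0:ℝ) 1, ((0 : Lp ℝ 2 mu01) : ℝ → ℝ) x * g x) = 0 := by
          have h0 : (∫ x in Set.Ioo (0:ℝ) 1, ((0 : Lp ℝ 2 mu01) : ℝ → ℝ) x * g x)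
              = ∫ x in Set.Ioo (0:ℝ) 1, (0:ℝ) := by
            refine integral_congr_ae ?_
            filter_upwards [Lp.coeFn_zero ℝ 2 mu01] with x hx
            rw [hx]; simp
          rw [h0, integral_zero]
        have hcz : c = 0 := by nlinarith [sq_nonneg (v 1)]
        rw [hz, hv1, hcz]
        simp
      · -- A > 0 : use u = toLp (-g), u1 = v 1
        have hgneg : MemLp (fun x => -g x) 2 mu01 := by
          exact hg.neg
        set u : Lp ℝ 2 mu01 := hgneg.toLp (fun x => -g x) with hu
        have hnu : ‖u‖^2 = c := by
          rw [hu, norm_toLp_sq hgneg, hc]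
          congr 1; funext x; ring
        have hiu : (∫ x in Set.Ioo (0:ℝ) 1, (u : ℝ → ℝ) x * g x) = -c := by
          rw [show -c = ∫ x in Set.Ioo (0:ℝ) 1, (-g x) * g x by
            rw [hc, ← integral_neg]; congr 1; funext x; ring]
          refine integral_congr_ae ?_
          filter_upwards [hgneg.coeFn_toLp] with x hx
          rw [hx]
        have hne : ¬(u = 0 ∧ v 1 = 0) := by
          rintro ⟨hu0, hv10⟩
          have hcz : c = 0 := by rw [← hnu, hu0]; simp
          have : A = 0 := by rw [hA, hcz, hv10]; ring
          rw [this] at hApos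
          exact lt_irrefl 0 hApos
        refine ⟨u, v 1, hne, ?_⟩
        rw [hiu, hnu]
        have h1 : v 1 * v 1 - -c = A := by rw [hA]; ring
        rw [h1, abs_of_nonneg hA0, show c + (v 1)^2 = A from rfl, Real.div_sqrt]
    · -- upper bound
      rintro t ⟨u, u1, hne, rfl⟩
      set w : Lp ℝ 2 mu01 := hg.toLp g with hw
      have hnw : ‖w‖^2 = c := norm_toLp_sq hg
      have hiu : (∫ x in Set.Ioo (0:ℝ) 1, (u : ℝ → ℝ) x * g x) = (inner ℝ u w : ℝ) :=
        integral_mul_eq_inner u hg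
      have hcs : |(inner ℝ u w : ℝ)| ≤ ‖u‖ * ‖w‖ := abs_real_inner_le_norm u w
      have hn0 : 0 < ‖u‖^2 + u1^2 := by
        rcases not_and_or.mp hne with h | h
        · have : 0 < ‖u‖ := norm_pos_iff.mpr h
          positivity
        · positivity
      rw [div_le_iff₀ (Real.sqrt_pos.mpr hn0)]
      have key : |u1 * v 1 - ∫ x in Set.Ioo (0:ℝ) 1, (u : ℝ → ℝ) x * g x|
          ≤ |u1| * |v 1| + ‖u‖ * ‖w‖ := by
        rw [hiu]
        calc |u1 * v 1 - (inner ℝ u w : ℝ)| ≤ |u1 * v 1| + |(inner ℝ u w : ℝ)| := abs_sub _ _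
        _ ≤ |u1| * |v 1| + ‖u‖ * ‖w‖ := by rw [abs_mul]; linarith
      have hlhs : (0:ℝ) ≤ |u1| * |v 1| + ‖u‖ * ‖w‖ := by positivity
      have h2 : |u1| * |v 1| + ‖u‖ * ‖w‖ ≤ Real.sqrt A * Real.sqrt (‖u‖^2 + u1^2) :=
        calc |u1| * |v 1| + ‖u‖ * ‖w‖
            = Real.sqrt ((|u1| * |v 1| + ‖u‖ * ‖w‖)^2) := (Real.sqrt_sq hlhs).symm
        _ ≤ Real.sqrt ((‖w‖^2 + (v 1)^2) * (‖u‖^2 + u1^2)) := by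
            refine Real.sqrt_le_sqrt ?_
            nlinarith [sq_nonneg (|u1| * ‖w‖ - ‖u‖ * |v 1|), sq_abs u1, sq_abs (v 1),
              abs_nonneg u1, abs_nonneg (v 1), norm_nonneg u, norm_nonneg w,
              mul_nonneg (abs_nonneg u1) (abs_nonneg (v 1)),
              mul_nonneg (norm_nonneg u) (norm_nonneg w)]
        _ = Real.sqrt (‖w‖^2 + (v 1)^2) * Real.sqrt (‖u‖^2 + u1^2) :=
            Real.sqrt_mul (by positivity) _
        _ = Real.sqrt A * Real.sqrt (‖u‖^2 + u1^2) := by rw [hA, hnw]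
      have h3 : Real.sqrt A = Real.sqrt (c + (v 1)^2) := by rw [hA]
      calc |u1 * v 1 - ∫ x in Set.Ioo (0:ℝ) 1, (u : ℝ → ℝ) x * g x|
          ≤ |u1| * |v 1| + ‖u‖ * ‖w‖ := key
      _ ≤ Real.sqrt A * Real.sqrt (‖u‖^2 + u1^2) := h2
      _ = Real.sqrt (c + (v 1)^2) * Real.sqrt (‖u‖^2 + u1^2) := by rw [h3]
  · intro u u1 hb
    have hu1 : u1 = 0 := by
      have h := hb (fun _ => 1) (fun _ => 0)
        (fun x _ => hasDerivAt_const x 1) (by simp only [zero_pow, ne_eq, OfNat.ofNat_ne_zero, not_false_eq_true]; exact intervalIntegrable_const)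
      simpa using h
    subst hu1
    refine ⟨?_, rfl⟩
    have hzero : ∀ f : ℝ →ᵇ ℝ,
        (inner ℝ u (BoundedContinuousFunction.toLp (E := ℝ) 2 mu01 ℝ f) : ℝ) = 0 := by
      intro f
      have hcont : Continuous f := f.continuous
      have hd : ∀ x ∈ Set.Icc (0:ℝ) 1, HasDerivAt (fun y => ∫ t in (0:ℝ)..y, f t) (f x) x := by
        intro x _
        exact intervalIntegral.integral_hasDerivAt_right
          (hcont.intervalIntegrable 0 x)
          (hcont.stronglyMeasurable.stronglyMeasurableAtFilter)
          hcont.continuousAt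
      have hi : IntervalIntegrable (fun x => (f x)^2) volume 0 1 :=
        (hcont.pow 2).intervalIntegrable 0 1
      have h := hb _ _ hd hi
      rw [zero_mul, zero_sub, neg_eq_zero] at h
      rw [inner_eq_integral, ← h]
      refine integral_congr_ae ?_
      filter_upwards [BoundedContinuousFunction.coeFn_toLp 2 mu01 ℝ f] with x hx
      rw [hx]
    have hall : ∀ w : Lp ℝ 2 mu01, (inner ℝ u w : ℝ) = 0 := by
      have hdense := BoundedContinuousFunction.toLp_denseRange ℝ mu01 ℝ
        (by norm_num : (2:ℝ≥0∞) ≠ ∞)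
      have heq : (fun w : Lp ℝ 2 mu01 => (inner ℝ u w : ℝ)) = (fun _ => (0:ℝ)) := by
        refine Continuous.ext_on hdense (innerSL ℝ u).continuous continuous_const ?_
        rintro w ⟨f, rfl⟩
        exact hzero f
      intro w
      exact congrFun heq w
    have := hall u
    rwa [inner_self_eq_zero] at this
end
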